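/- arXiv:2605.00079 — 5 statements merged into one kernel-verified Lean document; each statement's English description precedes it below -/
import Mathlib

section
/- The map sending an n×n magog matrix (a_{i,j}) to the (n+1)×(n+1) matrix (c_{i,j}) with c_{i,j} = Σ_{i'≤i, j'≤j} a_{i',j'} is a bijection from n×n magog matrices to magog corner-sum matrices of order n. -/
open Finset

/-- Partial row sum: sum of entries `a i j'` over (0-indexed) columns `j' < j`,
i.e. the 1-indexed partial row sum through column `j`. -/
def rowPS {n : ℕ} (a : Matrix (Fin n) (Fin n) ℤ) (i : Fin n) (j : ℕ) : ℤ :=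
  ∑ j' ∈ Finset.univ.filter (fun j' : Fin n => (j' : ℕ) < j), a i j'

/-- Partial column sum: sum of entries `a i' j` over (0-indexed) rows `i' < i`,
i.e. the 1-indexed partial column sum through row `i`. -/
def colPS {n : ℕ} (a : Matrix (Fin n) (Fin n) ℤ) (i : ℕ) (j : Fin n) : ℤ :=
  ∑ i' ∈ Finset.univ.filter (fun i' : Fin n => (i' : ℕ) < i), a i' j

/-- An `n × n` square sign matrix. -/
def IsSquareSign (n : ℕ) (a : Matrix (Fin n) (Fin n) ℤ) : Prop :=
  (∀ i j, a i j = 0 ∨ a i j = 1 ∨ a i j = -1) ∧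
  (∀ i, ∑ j, a i j = 1) ∧
  (∀ j, ∑ i, a i j = 1) ∧
  (∀ (i : ℕ) (j : Fin n), colPS a i j = 0 ∨ colPS a i j = 1) ∧
  (∀ (i : Fin n) (j : ℕ), 0 ≤ rowPS a i j)

/-- A magog matrix: a square sign matrix satisfying the special inequalities.
Here `i j : ℕ` are 0-indexed, so `i + 2 < n` corresponds to the 1-indexed
range `1 ≤ i ≤ n - 2`; the 1-indexed row `i+1` is the `Fin n` index `i`, etc. -/
def IsMagog (n : ℕ) (a : Matrix (Fin n) (Fin n) ℤ) : Prop :=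
  IsSquareSign n a ∧
  ∀ (i j : ℕ) (hi : i + 2 < n) (hj : j + 2 < n),
    0 ≤ rowPS a ⟨i + 1, by omega⟩ (j + 1) + colPS a (i + 2) ⟨j + 1, by omega⟩
        - colPS a (i + 1) ⟨j, by omega⟩
/-- A magog corner-sum matrix of order `n`, indexed by `0 ≤ i, j ≤ n`. -/
def IsMagogCSM (n : ℕ) (c : Fin (n + 1) → Fin (n + 1) → ℤ) : Prop :=
  (∀ k : Fin (n + 1), c 0 k = 0 ∧ c k 0 = 0) ∧
  (∀ k : Fin (n + 1), c (Fin.last n) k = (k : ℕ) ∧ c k (Fin.last n) = (k : ℕ)) ∧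
  (∀ (i : Fin (n + 1)) (j : ℕ) (hj : j < n),
      c i ⟨j + 1, by omega⟩ - c i ⟨j, by omega⟩ = 0 ∨
      c i ⟨j + 1, by omega⟩ - c i ⟨j, by omega⟩ = 1) ∧
  (∀ (i : ℕ) (hi : i < n) (j : Fin (n + 1)),
      c ⟨i, by omega⟩ j ≤ c ⟨i + 1, by omega⟩ j) ∧
  (∀ (i j : ℕ) (hi : i + 2 ≤ n) (hj : j + 2 ≤ n),
      2 * c ⟨i + 1, by omega⟩ ⟨j + 1, by omega⟩ ≤
        c ⟨i + 2, by omega⟩ ⟨j + 2, by omega⟩ + c ⟨i + 1, by omega⟩ ⟨j, by omega⟩)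

/-- The corner-sum map: `cornerOf a i j = ∑_{i' ≤ i, j' ≤ j} a_{i',j'}` (1-indexed). -/
def cornerOf {n : ℕ} (a : Matrix (Fin n) (Fin n) ℤ) : Fin (n + 1) → Fin (n + 1) → ℤ :=
  fun i j => ∑ i' ∈ Finset.univ.filter (fun i' : Fin n => (i' : ℕ) < (i : ℕ)),
      ∑ j' ∈ Finset.univ.filter (fun j' : Fin n => (j' : ℕ) < (j : ℕ)), a i' j'

section Aux

variable {n : ℕ}

lemma filt_succ (i : ℕ) (hi : i < n) :
    (Finset.univ.filter (fun x : Fin n => (x : ℕ) < i + 1)) =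
      insert ⟨i, hi⟩ (Finset.univ.filter (fun x : Fin n => (x : ℕ) < i)) := by
  ext x
  simp only [Finset.mem_filter, Finset.mem_insert, Finset.mem_univ, true_and, Fin.ext_iff]
  omega

lemma sum_filt_succ (f : Fin n → ℤ) (i : ℕ) (hi : i < n) :
    ∑ x ∈ Finset.univ.filter (fun x : Fin n => (x : ℕ) < i + 1), f x
      = (∑ x ∈ Finset.univ.filter (fun x : Fin n => (x : ℕ) < i), f x) + f ⟨i, hi⟩ := by
  rw [filt_succ i hi, Finset.sum_insert (by simp)]
  ring

lemma filt_ge (i : ℕ) (hi : n ≤ i) :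
    (Finset.univ.filter (fun x : Fin n => (x : ℕ) < i)) = Finset.univ := by
  ext x
  simpa using lt_of_lt_of_le x.isLt hi

lemma card_filt (k : ℕ) (hk : k ≤ n) :
    ((Finset.univ.filter (fun x : Fin n => (x : ℕ) < k))).card = k := by
  induction k with
  | zero => simp
  | succ k ih =>
      rw [filt_succ k (by omega), Finset.card_insert_of_notMem (by simp), ih (by omega)]

lemma rowPS_zero (a : Matrix (Fin n) (Fin n) ℤ) (i : Fin n) : rowPS a i 0 = 0 := by
  simp [rowPS]

lemma rowPS_succ (a : Matrix (Fin n) (Fin n) ℤ) (i : Fin n) (j : ℕ) (hj : j < n) :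
    rowPS a i (j + 1) = rowPS a i j + a i ⟨j, hj⟩ :=
  sum_filt_succ (a i) j hj

lemma rowPS_ge (a : Matrix (Fin n) (Fin n) ℤ) (i : Fin n) (j : ℕ) (hj : n ≤ j) :
    rowPS a i j = ∑ j', a i j' := by
  unfold rowPS; rw [filt_ge j hj]

lemma colPS_zero (a : Matrix (Fin n) (Fin n) ℤ) (j : Fin n) : colPS a 0 j = 0 := by
  simp [colPS]

lemma colPS_succ (a : Matrix (Fin n) (Fin n) ℤ) (i : ℕ) (hi : i < n) (j : Fin n) :
    colPS a (i + 1) j = colPS a i j + a ⟨i, hi⟩ j :=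
  sum_filt_succ (fun i' => a i' j) i hi

lemma colPS_ge (a : Matrix (Fin n) (Fin n) ℤ) (i : ℕ) (hi : n ≤ i) (j : Fin n) :
    colPS a i j = ∑ i', a i' j := by
  unfold colPS; rw [filt_ge i hi]

lemma corner_zero_row (a : Matrix (Fin n) (Fin n) ℤ) (h0 : 0 < n + 1) (j : Fin (n + 1)) :
    cornerOf a ⟨0, h0⟩ j = 0 := by
  simp [cornerOf]

lemma corner_zero_col (a : Matrix (Fin n) (Fin n) ℤ) (i : Fin (n + 1)) (h0 : 0 < n + 1) :
    cornerOf a i ⟨0, h0⟩ = 0 := by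
  simp [cornerOf]

lemma corner_row_step (a : Matrix (Fin n) (Fin n) ℤ) (i : ℕ) (hi : i < n)
    (h1 : i + 1 < n + 1) (h0 : i < n + 1) (j : Fin (n + 1)) :
    cornerOf a ⟨i + 1, h1⟩ j = cornerOf a ⟨i, h0⟩ j + rowPS a ⟨i, hi⟩ (j : ℕ) :=
  sum_filt_succ
    (fun i' => ∑ j' ∈ Finset.univ.filter (fun j' : Fin n => (j' : ℕ) < (j : ℕ)), a i' j') i hi

lemma corner_col_step (a : Matrix (Fin n) (Fin n) ℤ) (i : Fin (n + 1)) (j : ℕ) (hj : j < n)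
    (h1 : j + 1 < n + 1) (h0 : j < n + 1) :
    cornerOf a i ⟨j + 1, h1⟩ = cornerOf a i ⟨j, h0⟩ + colPS a (i : ℕ) ⟨j, hj⟩ := by
  unfold cornerOf colPS
  rw [← Finset.sum_add_distrib]
  exact Finset.sum_congr rfl fun i' _ => sum_filt_succ (a i') j hj

lemma corner_det (a : Matrix (Fin n) (Fin n) ℤ) (i j : Fin n) :
    a i j = cornerOf a ⟨(i : ℕ) + 1, Nat.succ_lt_succ i.isLt⟩
        ⟨(j : ℕ) + 1, Nat.succ_lt_succ j.isLt⟩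
      - cornerOf a ⟨(i : ℕ), Nat.lt_succ_of_lt i.isLt⟩ ⟨(j : ℕ) + 1, Nat.succ_lt_succ j.isLt⟩
      - cornerOf a ⟨(i : ℕ) + 1, Nat.succ_lt_succ i.isLt⟩ ⟨(j : ℕ), Nat.lt_succ_of_lt j.isLt⟩
      + cornerOf a ⟨(i : ℕ), Nat.lt_succ_of_lt i.isLt⟩ ⟨(j : ℕ), Nat.lt_succ_of_lt j.isLt⟩ := by
  have e1 : cornerOf a ⟨(i : ℕ) + 1, Nat.succ_lt_succ i.isLt⟩
        ⟨(j : ℕ) + 1, Nat.succ_lt_succ j.isLt⟩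
      = cornerOf a ⟨(i : ℕ) + 1, Nat.succ_lt_succ i.isLt⟩ ⟨(j : ℕ), Nat.lt_succ_of_lt j.isLt⟩
        + colPS a ((i : ℕ) + 1) ⟨(j : ℕ), j.isLt⟩ :=
    corner_col_step a _ (j : ℕ) j.isLt _ _
  have e2 : cornerOf a ⟨(i : ℕ), Nat.lt_succ_of_lt i.isLt⟩
        ⟨(j : ℕ) + 1, Nat.succ_lt_succ j.isLt⟩
      = cornerOf a ⟨(i : ℕ), Nat.lt_succ_of_lt i.isLt⟩ ⟨(j : ℕ), Nat.lt_succ_of_lt j.isLt⟩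
        + colPS a (i : ℕ) ⟨(j : ℕ), j.isLt⟩ :=
    corner_col_step a _ (j : ℕ) j.isLt _ _
  have e3 : colPS a ((i : ℕ) + 1) ⟨(j : ℕ), j.isLt⟩
      = colPS a (i : ℕ) ⟨(j : ℕ), j.isLt⟩ + a i j := by
    have := colPS_succ a (i : ℕ) i.isLt ⟨(j : ℕ), j.isLt⟩
    simpa [Fin.eta] using this
  linarith

lemma corner_mono_row (a : Matrix (Fin n) (Fin n) ℤ)
    (h : ∀ (i : Fin n) (j : ℕ), 0 ≤ rowPS a i j) (j : Fin (n + 1)) :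
    ∀ (i' : ℕ) (_ : i' ≤ n) (i : ℕ) (_ : i ≤ i'),
      cornerOf a ⟨i, by omega⟩ j ≤ cornerOf a ⟨i', by omega⟩ j := by
  intro i'
  induction i' with
  | zero =>
      intro hi' i hii
      have hi0 : i = 0 := by omega
      subst hi0
      exact le_rfl
  | succ k ih =>
      intro hi' i hii
      rcases Nat.eq_or_lt_of_le hii with rfl | hlt
      · exact le_rfl
      · have h2 := ih (by omega) i (by omega)
        have h3 : cornerOf a (⟨k, by omega⟩ : Fin (n + 1)) j
            ≤ cornerOf a ⟨k + 1, by omega⟩ j := by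
          rw [corner_row_step a k (by omega) (by omega) (by omega) j]
          linarith [h ⟨k, by omega⟩ (j : ℕ)]
        exact le_trans h2 h3

lemma corner_mono_col (a : Matrix (Fin n) (Fin n) ℤ)
    (h : ∀ (i : ℕ) (j : Fin n), colPS a i j = 0 ∨ colPS a i j = 1) (i : Fin (n + 1)) :
    ∀ (j' : ℕ) (_ : j' ≤ n) (j : ℕ) (_ : j ≤ j'),
      cornerOf a i ⟨j, by omega⟩ ≤ cornerOf a i ⟨j', by omega⟩ := by
  intro j'
  induction j' with
  | zero =>
      intro hj' j hjj
      have hj0 : j = 0 := by omega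
      subst hj0
      exact le_rfl
  | succ k ih =>
      intro hj' j hjj
      rcases Nat.eq_or_lt_of_le hjj with rfl | hlt
      · exact le_rfl
      · have h2 := ih (by omega) j (by omega)
        have h3 : cornerOf a i (⟨k, by omega⟩ : Fin (n + 1))
            ≤ cornerOf a i ⟨k + 1, by omega⟩ := by
          rw [corner_col_step a i k (by omega) (by omega) (by omega)]
          rcases h (i : ℕ) ⟨k, by omega⟩ with h4 | h4 <;> linarith
        exact le_trans h2 h3

lemma mapsTo_aux {n : ℕ} (a : Matrix (Fin n) (Fin n) ℤ) (ha : IsMagog n a) :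
    IsMagogCSM n (cornerOf a) := by
  obtain ⟨⟨hent, hrowsum, hcolsum, hcps, hrps⟩, hspec⟩ := ha
  have h2 : ∀ k : Fin (n + 1), cornerOf a (Fin.last n) k = ((k : ℕ) : ℤ)
      ∧ cornerOf a k (Fin.last n) = ((k : ℕ) : ℤ) := by
    intro k
    constructor
    · unfold cornerOf
      rw [Fin.val_last, filt_ge n le_rfl]
      refine (Finset.sum_comm).trans ?_
      calc (∑ j' ∈ Finset.univ.filter (fun j' : Fin n => (j' : ℕ) < (k : ℕ)), ∑ i', a i' j')
          = ∑ j' ∈ Finset.univ.filter (fun j' : Fin n => (j' : ℕ) < (k : ℕ)), 1 :=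
            Finset.sum_congr rfl fun j' _ => hcolsum j'
        _ = ((k : ℕ) : ℤ) := by
            rw [Finset.sum_const, card_filt (k : ℕ) (Nat.lt_succ_iff.mp k.isLt)]
            simp
    · unfold cornerOf
      rw [Fin.val_last]
      calc (∑ i' ∈ Finset.univ.filter (fun i' : Fin n => (i' : ℕ) < (k : ℕ)),
            ∑ j' ∈ Finset.univ.filter (fun j' : Fin n => (j' : ℕ) < n), a i' j')
          = ∑ i' ∈ Finset.univ.filter (fun i' : Fin n => (i' : ℕ) < (k : ℕ)), 1 := by
            refine Finset.sum_congr rfl fun i' _ => ?_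
            rw [filt_ge n le_rfl]
            exact hrowsum i'
        _ = ((k : ℕ) : ℤ) := by
            rw [Finset.sum_const, card_filt (k : ℕ) (Nat.lt_succ_iff.mp k.isLt)]
            simp
  have h2' : ∀ (k : ℕ) (hk : k ≤ n),
      cornerOf a (Fin.last n) ⟨k, by omega⟩ = (k : ℤ) ∧
      cornerOf a ⟨k, by omega⟩ (Fin.last n) = (k : ℤ) := fun k hk => h2 ⟨k, by omega⟩
  refine ⟨?_, h2, ?_, ?_, ?_⟩
  · intro k
    exact ⟨by simp [cornerOf], by simp [cornerOf]⟩
  · intro i j hj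
    have e := corner_col_step a i j hj (by omega) (by omega)
    rcases hcps (i : ℕ) ⟨j, hj⟩ with h | h
    · left; linarith
    · right; linarith
  · intro i hi j
    have e := corner_row_step a i hi (by omega) (by omega) j
    linarith [hrps ⟨i, hi⟩ (j : ℕ)]
  · intro i j hi hj
    have e1 : cornerOf a ⟨i + 2, by omega⟩ ⟨j + 2, by omega⟩
        = cornerOf a ⟨i + 2, by omega⟩ ⟨j + 1, by omega⟩ + colPS a (i + 2) ⟨j + 1, by omega⟩ :=
      corner_col_step a ⟨i + 2, by omega⟩ (j + 1) (by omega) (by omega) (by omega)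
    have e3 : cornerOf a ⟨i + 1, by omega⟩ ⟨j + 1, by omega⟩
        = cornerOf a ⟨i + 1, by omega⟩ ⟨j, by omega⟩ + colPS a (i + 1) ⟨j, by omega⟩ :=
      corner_col_step a ⟨i + 1, by omega⟩ j (by omega) (by omega) (by omega)
    rcases Nat.lt_or_ge (i + 2) n with hin | hin
    · rcases Nat.lt_or_ge (j + 2) n with hjn | hjn
      · have e2 : cornerOf a ⟨i + 2, by omega⟩ ⟨j + 1, by omega⟩
            = cornerOf a ⟨i + 1, by omega⟩ ⟨j + 1, by omega⟩ + rowPS a ⟨i + 1, by omega⟩ (j + 1) :=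
          corner_row_step a (i + 1) (by omega) (by omega) (by omega) ⟨j + 1, by omega⟩
        have h5 := hspec i j hin hjn
        linarith
      · have hjn' : j + 2 = n := by omega
        have hlast : (⟨j + 2, by omega⟩ : Fin (n + 1)) = Fin.last n := by
          apply Fin.ext
          simp [hjn']
        have hv := (h2' (i + 2) (by omega)).2
        have hvn := (h2' (i + 1) (by omega)).2
        have hub : cornerOf a ⟨i + 1, by omega⟩ ⟨j + 1, by omega⟩
            ≤ cornerOf a ⟨i + 1, by omega⟩ (Fin.last n) :=
          corner_mono_col a hcps ⟨i + 1, by omega⟩ n le_rfl (j + 1) (by omega)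
        push_cast at hv hvn
        rw [hlast]
        rcases hcps (i + 1) ⟨j, by omega⟩ with hs | hs <;> linarith
    · have hin' : i + 2 = n := by omega
      have hlast : (⟨i + 2, by omega⟩ : Fin (n + 1)) = Fin.last n := by
        apply Fin.ext
        simp [hin']
      have hv := (h2' (j + 2) (by omega)).1
      have hvn := (h2' (j + 1) (by omega)).1
      have hub : cornerOf a ⟨i + 1, by omega⟩ ⟨j + 1, by omega⟩
          ≤ cornerOf a (Fin.last n) ⟨j + 1, by omega⟩ :=
        corner_mono_row a hrps ⟨j + 1, by omega⟩ n le_rfl (i + 1) (by omega)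
      push_cast at hv hvn
      rw [hlast]
      rcases hcps (i + 1) ⟨j, by omega⟩ with hs | hs <;> linarith

set_option maxHeartbeats 1600000 in
lemma surj_aux {n : ℕ} (c : Fin (n + 1) → Fin (n + 1) → ℤ) (hc : IsMagogCSM n c) :
    ∃ a, IsMagog n a ∧ cornerOf a = c := by
  obtain ⟨hb0, hbn, hcd, hrm, hsp⟩ := hc
  set a : Matrix (Fin n) (Fin n) ℤ := fun i j =>
    c ⟨(i : ℕ) + 1, Nat.succ_lt_succ i.isLt⟩ ⟨(j : ℕ) + 1, Nat.succ_lt_succ j.isLt⟩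
      - c ⟨(i : ℕ), Nat.lt_succ_of_lt i.isLt⟩ ⟨(j : ℕ) + 1, Nat.succ_lt_succ j.isLt⟩
      - c ⟨(i : ℕ) + 1, Nat.succ_lt_succ i.isLt⟩ ⟨(j : ℕ), Nat.lt_succ_of_lt j.isLt⟩
      + c ⟨(i : ℕ), Nat.lt_succ_of_lt i.isLt⟩ ⟨(j : ℕ), Nat.lt_succ_of_lt j.isLt⟩
    with ha_def
  have hbn' : ∀ (k : ℕ) (hk : k ≤ n),
      c (Fin.last n) ⟨k, by omega⟩ = (k : ℤ) ∧ c ⟨k, by omega⟩ (Fin.last n) = (k : ℤ) :=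
    fun k hk => hbn ⟨k, by omega⟩
  have hA : ∀ (i : Fin n) (j : ℕ) (hj : j ≤ n),
      rowPS a i j = c ⟨(i : ℕ) + 1, Nat.succ_lt_succ i.isLt⟩ ⟨j, by omega⟩
        - c ⟨(i : ℕ), Nat.lt_succ_of_lt i.isLt⟩ ⟨j, by omega⟩ := by
    intro i j
    induction j with
    | zero =>
        intro _
        rw [rowPS_zero]
        simp only [Fin.mk_zero]
        rw [(hb0 _).2, (hb0 _).2]
        ring
    | succ k ih =>
        intro hk
        rw [rowPS_succ a i k (by omega), ih (by omega)]
        simp only [ha_def]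
        ring
  have hB : ∀ (i : ℕ) (hi : i ≤ n) (j : Fin n),
      colPS a i j = c ⟨i, by omega⟩ ⟨(j : ℕ) + 1, Nat.succ_lt_succ j.isLt⟩
        - c ⟨i, by omega⟩ ⟨(j : ℕ), Nat.lt_succ_of_lt j.isLt⟩ := by
    intro i
    induction i with
    | zero =>
        intro _ j
        rw [colPS_zero]
        simp only [Fin.mk_zero]
        rw [(hb0 _).1, (hb0 _).1]
        ring
    | succ k ih =>
        intro hk j
        rw [colPS_succ a k (by omega) j, ih (by omega) j]
        simp only [ha_def]
        ring
  have hAn : ∀ i : Fin n, rowPS a i n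
      = c ⟨(i : ℕ) + 1, Nat.succ_lt_succ i.isLt⟩ (Fin.last n)
        - c ⟨(i : ℕ), Nat.lt_succ_of_lt i.isLt⟩ (Fin.last n) := fun i => hA i n le_rfl
  have hBn : ∀ j : Fin n, colPS a n j
      = c (Fin.last n) ⟨(j : ℕ) + 1, Nat.succ_lt_succ j.isLt⟩
        - c (Fin.last n) ⟨(j : ℕ), Nat.lt_succ_of_lt j.isLt⟩ := fun j => hB n le_rfl j
  have hrow1 : ∀ i : Fin n, rowPS a i n = 1 := by
    intro i
    have h1 := (hbn' ((i : ℕ) + 1) i.isLt).2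
    have h2 := (hbn' (i : ℕ) (le_of_lt i.isLt)).2
    push_cast at h1 h2
    rw [hAn i]
    linarith
  have hcol1 : ∀ j : Fin n, colPS a n j = 1 := by
    intro j
    have h1 := (hbn' ((j : ℕ) + 1) j.isLt).1
    have h2 := (hbn' (j : ℕ) (le_of_lt j.isLt)).1
    push_cast at h1 h2
    rw [hBn j]
    linarith
  have hent : ∀ i j, a i j = 0 ∨ a i j = 1 ∨ a i j = -1 := by
    intro i j
    have h1 := hcd ⟨(i : ℕ) + 1, Nat.succ_lt_succ i.isLt⟩ (j : ℕ) j.isLt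
    have h0 := hcd ⟨(i : ℕ), Nat.lt_succ_of_lt i.isLt⟩ (j : ℕ) j.isLt
    have haij : a i j
        = (c ⟨(i : ℕ) + 1, Nat.succ_lt_succ i.isLt⟩ ⟨(j : ℕ) + 1, Nat.succ_lt_succ j.isLt⟩
            - c ⟨(i : ℕ) + 1, Nat.succ_lt_succ i.isLt⟩ ⟨(j : ℕ), Nat.lt_succ_of_lt j.isLt⟩)
          - (c ⟨(i : ℕ), Nat.lt_succ_of_lt i.isLt⟩ ⟨(j : ℕ) + 1, Nat.succ_lt_succ j.isLt⟩
            - c ⟨(i : ℕ), Nat.lt_succ_of_lt i.isLt⟩ ⟨(j : ℕ), Nat.lt_succ_of_lt j.isLt⟩) := by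
      simp only [ha_def]
      ring
    rcases h1 with h1 | h1 <;> rcases h0 with h0 | h0
    · left; linarith
    · right; right; linarith
    · right; left; linarith
    · left; linarith
  have hrowsum : ∀ i, ∑ j, a i j = 1 := by
    intro i
    rw [← rowPS_ge a i n le_rfl]
    exact hrow1 i
  have hcolsum : ∀ j, ∑ i, a i j = 1 := by
    intro j
    rw [← colPS_ge a n le_rfl j]
    exact hcol1 j
  have hcps : ∀ (i : ℕ) (j : Fin n), colPS a i j = 0 ∨ colPS a i j = 1 := by
    intro i j
    rcases le_or_gt i n with hi | hi
    · rw [hB i hi j]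
      exact hcd ⟨i, by omega⟩ (j : ℕ) j.isLt
    · right
      rw [colPS_ge a i (by omega) j, ← colPS_ge a n le_rfl j]
      exact hcol1 j
  have hrps : ∀ (i : Fin n) (j : ℕ), 0 ≤ rowPS a i j := by
    intro i j
    rcases le_or_gt j n with hj | hj
    · rw [hA i j hj]
      have := hrm (i : ℕ) i.isLt ⟨j, by omega⟩
      linarith
    · rw [rowPS_ge a i j (by omega), ← rowPS_ge a i n le_rfl, hrow1 i]
      norm_num
  have hmg : ∀ (i j : ℕ) (hi : i + 2 < n) (hj : j + 2 < n),
      0 ≤ rowPS a ⟨i + 1, by omega⟩ (j + 1) + colPS a (i + 2) ⟨j + 1, by omega⟩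
          - colPS a (i + 1) ⟨j, by omega⟩ := by
    intro i j hi hj
    have e1 : rowPS a ⟨i + 1, by omega⟩ (j + 1)
        = c ⟨i + 2, by omega⟩ ⟨j + 1, by omega⟩ - c ⟨i + 1, by omega⟩ ⟨j + 1, by omega⟩ :=
      hA ⟨i + 1, by omega⟩ (j + 1) (by omega)
    have e2 : colPS a (i + 2) ⟨j + 1, by omega⟩
        = c ⟨i + 2, by omega⟩ ⟨j + 2, by omega⟩ - c ⟨i + 2, by omega⟩ ⟨j + 1, by omega⟩ :=
      hB (i + 2) (by omega) ⟨j + 1, by omega⟩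
    have e3 : colPS a (i + 1) ⟨j, by omega⟩
        = c ⟨i + 1, by omega⟩ ⟨j + 1, by omega⟩ - c ⟨i + 1, by omega⟩ ⟨j, by omega⟩ :=
      hB (i + 1) (by omega) ⟨j, by omega⟩
    have h5 := hsp i j (by omega) (by omega)
    linarith
  have hC : ∀ (i : ℕ) (hi : i ≤ n) (j : Fin (n + 1)),
      cornerOf a ⟨i, by omega⟩ j = c ⟨i, by omega⟩ j := by
    intro i
    induction i with
    | zero =>
        intro _ j
        rw [corner_zero_row]
        simp only [Fin.mk_zero]
        exact ((hb0 j).1).symm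
    | succ k ih =>
        intro hk j
        have e := corner_row_step a k (by omega) (by omega) (by omega) j
        have e2 : rowPS a ⟨k, by omega⟩ (j : ℕ)
            = c ⟨k + 1, by omega⟩ j - c ⟨k, by omega⟩ j :=
          hA ⟨k, by omega⟩ (j : ℕ) (Nat.lt_succ_iff.mp j.isLt)
        rw [e, ih (by omega) j, e2]
        ring
  refine ⟨a, ⟨⟨hent, hrowsum, hcolsum, hcps, hrps⟩, hmg⟩, ?_⟩
  funext i j
  have h := hC (i : ℕ) (Nat.lt_succ_iff.mp i.isLt) j
  simpa [Fin.eta] using h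

end Aux

/-- The map sending an `n × n` magog matrix to its corner-sum matrix is a bijection
from `n × n` magog matrices to magog corner-sum matrices of order `n`. -/
theorem magog_to_cornerSum_bijective (n : ℕ) :
    Set.BijOn cornerOf {a | IsMagog n a} {c | IsMagogCSM n c} := by
  refine ⟨fun a ha => mapsTo_aux a ha, ?_, ?_⟩
  · intro x hx y hy hxy
    funext i j
    have ex := corner_det x i j
    have ey := corner_det y i j
    rw [ex, hxy]
    exact ey.symm
  · intro c hc
    obtain ⟨a, ha, hac⟩ := surj_aux c hc
    exact ⟨a, ha, hac⟩
end

section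
/- The permutation matrix of a permutation σ of {1,...,n} is a magog matrix if and only if σ is 132-avoiding, i.e., there are no indices i < j < k with σ(i) < σ(k) < σ(j). -/
open Finset

/-- The permutation matrix of a permutation `σ`. -/
def permMat {n : ℕ} (σ : Equiv.Perm (Fin n)) : Matrix (Fin n) (Fin n) ℤ :=
  fun i j => if j = σ i then 1 else 0

lemma rowPS_permMat {n : ℕ} (σ : Equiv.Perm (Fin n)) (i : Fin n) (j : ℕ) :
    rowPS (permMat σ) i j = if ((σ i : ℕ) < j) then 1 else 0 := by
  unfold rowPS permMat
  rw [Finset.sum_ite_eq' (Finset.univ.filter (fun j' : Fin n => (j' : ℕ) < j)) (σ i) (fun _ => (1:ℤ))]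
  simp

lemma colPS_permMat {n : ℕ} (σ : Equiv.Perm (Fin n)) (i : ℕ) (j : Fin n) :
    colPS (permMat σ) i j = if ((σ.symm j : ℕ) < i) then 1 else 0 := by
  unfold colPS permMat
  have h : ∀ i' : Fin n, (if j = σ i' then (1:ℤ) else 0) = if i' = σ.symm j then 1 else 0 := by
    intro i'
    by_cases h : i' = σ.symm j
    · subst h; simp
    · have : j ≠ σ i' := fun hc => h (by rw [hc]; simp)
      simp [h, this]
  simp only [h]
  rw [Finset.sum_ite_eq' (Finset.univ.filter (fun i' : Fin n => (i' : ℕ) < i)) (σ.symm j) (fun _ => (1:ℤ))]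
  simp

lemma permMat_isSquareSign {n : ℕ} (σ : Equiv.Perm (Fin n)) :
    IsSquareSign n (permMat σ) := by
  refine ⟨?_, ?_, ?_, ?_, ?_⟩
  · intro i j; unfold permMat; split <;> simp
  · intro i; unfold permMat
    rw [Finset.sum_ite_eq' Finset.univ (σ i) (fun _ => (1:ℤ))]; simp
  · intro j; unfold permMat
    have h : ∀ i' : Fin n, (if j = σ i' then (1:ℤ) else 0) = if i' = σ.symm j then 1 else 0 := by
      intro i'
      by_cases h : i' = σ.symm j
      · subst h; simp
      · have : j ≠ σ i' := fun hc => h (by rw [hc]; simp)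
        simp [h, this]
    simp only [h]
    rw [Finset.sum_ite_eq' Finset.univ (σ.symm j) (fun _ => (1:ℤ))]; simp
  · intro i j; rw [colPS_permMat]; split <;> simp
  · intro i j; rw [rowPS_permMat]; split <;> simp

lemma exists_pattern_of {n : ℕ} (σ : Equiv.Perm (Fin n)) (b v w : Fin n)
    (hvw : (w : ℕ) = (v : ℕ) + 1)
    (h1 : ¬ ((σ b : ℕ) < (v : ℕ) + 1))
    (h2 : ¬ ((σ.symm w : ℕ) < (b : ℕ) + 1))
    (h3 : (σ.symm v : ℕ) < (b : ℕ)) :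
    ∃ a b c : Fin n, a < b ∧ b < c ∧ σ a < σ c ∧ σ c < σ b := by
  push_neg at h1 h2
  refine ⟨σ.symm v, b, σ.symm w, Fin.lt_def.mpr h3, Fin.lt_def.mpr (by omega), ?_, ?_⟩
  · simp only [Equiv.apply_symm_apply]
    exact Fin.lt_def.mpr (by omega)
  · simp only [Equiv.apply_symm_apply]
    have hne : σ b ≠ w := by
      intro he
      have h5 : σ.symm w = b := by rw [← he]; simp
      rw [h5] at h2
      omega
    have h6 := Fin.val_ne_of_ne hne
    exact Fin.lt_def.mpr (by omega)

/-- The permutation matrix of `σ` is a magog matrix iff `σ` is 132-avoiding: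
there are no indices `i < j < k` with `σ i < σ k < σ j`. -/
theorem permMat_isMagog_iff_avoids_132 (n : ℕ) (σ : Equiv.Perm (Fin n)) :
    IsMagog n (permMat σ) ↔
      ¬ ∃ i j k : Fin n, i < j ∧ j < k ∧ σ i < σ k ∧ σ k < σ j := by
  constructor
  · rintro ⟨-, hmag⟩ ⟨a, b, c, hab, hbc, h1, h2⟩
    -- find j = max of S
    set S : Finset (Fin n) :=
      Finset.univ.filter (fun v => σ a ≤ v ∧ v < σ c ∧ ((σ.symm v : ℕ) < (b : ℕ))) with hS
    have hSne : S.Nonempty := by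
      refine ⟨σ a, ?_⟩
      simp only [hS, Finset.mem_filter, Finset.mem_univ, true_and]
      exact ⟨le_refl _, h1, by simp [hab]⟩
    set m : Fin n := S.max' hSne with hm
    have hmS : m ∈ S := S.max'_mem hSne
    simp only [hS, Finset.mem_filter, Finset.mem_univ, true_and] at hmS
    obtain ⟨ham, hmc, hmb⟩ := hmS
    have hmcn : (m : ℕ) < (σ c : ℕ) := hmc
    have hscn : (σ c : ℕ) < (σ b : ℕ) := h2
    have hbn : (b : ℕ) < (c : ℕ) := hbc
    have hcn : (c : ℕ) < n := c.isLt
    have hsbn : (σ b : ℕ) < n := (σ b).isLt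
    have hb1 : 1 ≤ (b : ℕ) := by
      have : (a : ℕ) < (b : ℕ) := hab
      omega
    set m1 : Fin n := ⟨(m : ℕ) + 1, by omega⟩ with hm1
    -- σ.symm m1 ≥ b+1
    have hkey : (b : ℕ) + 1 ≤ (σ.symm m1 : ℕ) := by
      by_contra hlt
      push_neg at hlt
      -- σ.symm m1 ≤ b. If = b then σ b = m1, but σ b > m+1. 
      have hne : σ.symm m1 ≠ b := by
        intro he
        have : σ b = m1 := by rw [← he]; simp
        have : (σ b : ℕ) = (m : ℕ) + 1 := by rw [this]
        omega
      have hlt' : (σ.symm m1 : ℕ) < (b : ℕ) := by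
        have := Fin.val_ne_of_ne hne; omega
      have hne2 : m1 ≠ σ c := by
        intro he
        have : σ.symm m1 = c := by rw [he]; simp
        rw [this] at hlt'
        omega
      have hm1S : m1 ∈ S := by
        simp only [hS, Finset.mem_filter, Finset.mem_univ, true_and]
        refine ⟨?_, ?_, hlt'⟩
        · have : (σ a : ℕ) ≤ (m : ℕ) := ham
          exact Fin.le_def.mpr (by simp [hm1]; omega)
        · have h3 : (m : ℕ) + 1 ≤ (σ c : ℕ) := hmcn
          have h4 : (m : ℕ) + 1 ≠ (σ c : ℕ) := fun he => hne2 (Fin.ext he)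
          exact Fin.lt_def.mpr (by simp [hm1]; omega)
      have := S.le_max' m1 hm1S
      rw [← hm] at this
      have : (m1 : ℕ) ≤ (m : ℕ) := this
      simp [hm1] at this
    -- apply magog at i = b-1, j = m
    have hi : ((b : ℕ) - 1) + 2 < n := by omega
    have hj : (m : ℕ) + 2 < n := by omega
    have H := hmag ((b : ℕ) - 1) (m : ℕ) hi hj
    rw [rowPS_permMat, colPS_permMat, colPS_permMat] at H
    have e1 : (⟨(b : ℕ) - 1 + 1, by omega⟩ : Fin n) = b :=
      Fin.ext (show (b : ℕ) - 1 + 1 = (b : ℕ) by omega)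
    have e2 : (⟨(m : ℕ) + 1, by omega⟩ : Fin n) = m1 := rfl
    have e3 : (⟨(m : ℕ), by omega⟩ : Fin n) = m := rfl
    rw [e1, e2, e3] at H
    have v1 : ¬ ((σ b : ℕ) < (m : ℕ) + 1) := by omega
    have v2 : ¬ ((σ.symm m1 : ℕ) < (b : ℕ) - 1 + 2) := by omega
    have v3 : ((σ.symm m : ℕ) < (b : ℕ) - 1 + 1) := by omega
    rw [if_neg v1, if_neg v2, if_pos v3] at H
    omega
  · intro hav
    refine ⟨permMat_isSquareSign σ, ?_⟩
    intro i j hi hj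
    rw [rowPS_permMat, colPS_permMat, colPS_permMat]
    split <;> split <;> split <;> try norm_num
    rename_i h1 h2 h3
    exact absurd (exists_pattern_of σ ⟨i + 1, by omega⟩ ⟨j, by omega⟩
      ⟨j + 1, by omega⟩ rfl h1 h2 h3) hav
end

section
/- Let (c_{i,j})_{0≤i,j≤n} be a magog corner-sum matrix of order n and define a_{i,j} = c_{i,j} − c_{i−1,j} − c_{i,j−1} + c_{i−1,j−1} for 1 ≤ i,j ≤ n. Then (a_{i,j}) is a magog matrix of order n, and its corner sums recover (c_{i,j}). -/
open Finset

lemma telescope_aux {n : ℕ} (f : Fin (n+1) → ℤ) :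
    ∀ (j : ℕ) (hj : j ≤ n),
    ∑ j' ∈ Finset.univ.filter (fun j' : Fin n => (j' : ℕ) < j),
      (f j'.succ - f j'.castSucc) = f ⟨j, by omega⟩ - f ⟨0, by omega⟩
  | 0, hj => by
    have : Finset.univ.filter (fun j' : Fin n => (j' : ℕ) < 0) = ∅ := by
      ext x; simp
    simp [this]
  | j+1, hj => by
    have h1 : Finset.univ.filter (fun j' : Fin n => (j' : ℕ) < j + 1)
        = insert (⟨j, by omega⟩ : Fin n)
            (Finset.univ.filter (fun j' : Fin n => (j' : ℕ) < j)) := by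
      ext x; simp [Fin.ext_iff]; omega
    rw [h1, Finset.sum_insert (by simp), telescope_aux f j (by omega)]
    have h2 : (⟨j, by omega⟩ : Fin n).succ = (⟨j+1, by omega⟩ : Fin (n+1)) := rfl
    have h3 : (⟨j, by omega⟩ : Fin n).castSucc = (⟨j, by omega⟩ : Fin (n+1)) := rfl
    rw [h2, h3]; ring

lemma rowPS_eq_aux {n : ℕ} (c : Fin (n+1) → Fin (n+1) → ℤ)
    (i : Fin n) (j : ℕ) (hj : j ≤ n) :
    rowPS (fun i j : Fin n =>
      c i.succ j.succ - c i.castSucc j.succ - c i.succ j.castSucc +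
        c i.castSucc j.castSucc) i j
      = (c i.succ ⟨j, by omega⟩ - c i.castSucc ⟨j, by omega⟩)
        - (c i.succ ⟨0, by omega⟩ - c i.castSucc ⟨0, by omega⟩) := by
  have h := telescope_aux (fun k => c i.succ k - c i.castSucc k) j hj
  simp only [rowPS]
  rw [show (∑ j' ∈ Finset.univ.filter (fun j' : Fin n => (j':ℕ) < j),
      (c i.succ j'.succ - c i.castSucc j'.succ - c i.succ j'.castSucc +
        c i.castSucc j'.castSucc))
    = ∑ j' ∈ Finset.univ.filter (fun j' : Fin n => (j':ℕ) < j),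
      ((fun k => c i.succ k - c i.castSucc k) j'.succ
        - (fun k => c i.succ k - c i.castSucc k) j'.castSucc)
    from Finset.sum_congr rfl (fun x _ => by ring), h]

lemma colPS_eq_aux {n : ℕ} (c : Fin (n+1) → Fin (n+1) → ℤ)
    (i : ℕ) (hi : i ≤ n) (j : Fin n) :
    colPS (fun i j : Fin n =>
      c i.succ j.succ - c i.castSucc j.succ - c i.succ j.castSucc +
        c i.castSucc j.castSucc) i j
      = (c ⟨i, by omega⟩ j.succ - c ⟨i, by omega⟩ j.castSucc)
        - (c ⟨0, by omega⟩ j.succ - c ⟨0, by omega⟩ j.castSucc) := by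
  have h := telescope_aux (fun k => c k j.succ - c k j.castSucc) i hi
  simp only [colPS]
  rw [show (∑ i' ∈ Finset.univ.filter (fun i' : Fin n => (i':ℕ) < i),
      (c i'.succ j.succ - c i'.castSucc j.succ - c i'.succ j.castSucc +
        c i'.castSucc j.castSucc))
    = ∑ i' ∈ Finset.univ.filter (fun i' : Fin n => (i':ℕ) < i),
      ((fun k => c k j.succ - c k j.castSucc) i'.succ
        - (fun k => c k j.succ - c k j.castSucc) i'.castSucc)
    from Finset.sum_congr rfl (fun x _ => by ring), h]

lemma rowPS_clip_aux {n : ℕ} (a : Matrix (Fin n) (Fin n) ℤ) (i : Fin n) (j : ℕ) :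
    rowPS a i j = rowPS a i (min j n) := by
  unfold rowPS; congr 1; ext x; simp only [Finset.mem_filter]
  have := x.isLt; constructor <;> intro h <;> exact ⟨h.1, by omega⟩

lemma colPS_clip_aux {n : ℕ} (a : Matrix (Fin n) (Fin n) ℤ) (i : ℕ) (j : Fin n) :
    colPS a i j = colPS a (min i n) j := by
  unfold colPS; congr 1; ext x; simp only [Finset.mem_filter]
  have := x.isLt; constructor <;> intro h <;> exact ⟨h.1, by omega⟩

lemma filter_univ_lt_aux (m : ℕ) :
    Finset.univ.filter (fun x : Fin m => (x:ℕ) < m) = Finset.univ :=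
  Finset.filter_true_of_mem (fun x _ => x.isLt)

/-- Given a magog corner-sum matrix `c` of order `n`, the matrix of second
differences `a_{i,j} = c_{i,j} - c_{i-1,j} - c_{i,j-1} + c_{i-1,j-1}`
(1-indexed) is a magog matrix of order `n`, and its corner sums recover `c`. -/
theorem cornerSum_inverse (n : ℕ) (c : Fin (n + 1) → Fin (n + 1) → ℤ)
    (hc : IsMagogCSM n c) :
    IsMagog n (fun i j : Fin n =>
      c i.succ j.succ - c i.castSucc j.succ - c i.succ j.castSucc +
        c i.castSucc j.castSucc) ∧
    cornerOf (fun i j : Fin n =>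
      c i.succ j.succ - c i.castSucc j.succ - c i.succ j.castSucc +
        c i.castSucc j.castSucc) = c := by
  obtain ⟨hz, hlast, hrow, hmono, hineq⟩ := hc
  have h0' : ∀ k, c 0 k = 0 := fun k => (hz k).1
  set A : Matrix (Fin n) (Fin n) ℤ := (fun i j : Fin n =>
      c i.succ j.succ - c i.castSucc j.succ - c i.succ j.castSucc +
        c i.castSucc j.castSucc) with hA
  have key : ∀ (r : Fin (n+1)) (j : Fin n),
      c r j.succ - c r j.castSucc = 0 ∨ c r j.succ - c r j.castSucc = 1 :=
    fun r j => hrow r j j.isLt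
  have hrps : ∀ (i : Fin n) (j : ℕ) (hj : j ≤ n),
      rowPS A i j = c i.succ ⟨j, by omega⟩ - c i.castSucc ⟨j, by omega⟩ := by
    intro i j hj
    rw [hA, rowPS_eq_aux c i j hj]
    simp only [Fin.mk_zero, (hz i.succ).2, (hz i.castSucc).2]
    ring
  have hcps : ∀ (i : ℕ) (hi : i ≤ n) (j : Fin n),
      colPS A i j = c ⟨i, by omega⟩ j.succ - c ⟨i, by omega⟩ j.castSucc := by
    intro i hi j
    rw [hA, colPS_eq_aux c i hi j]
    simp only [Fin.mk_zero, (hz j.succ).1, (hz j.castSucc).1]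
    ring
  refine ⟨⟨⟨?_, ?_, ?_, ?_, ?_⟩, ?_⟩, ?_⟩
  · -- entries in {0,1,-1}
    intro i j
    have d1 := key i.succ j
    have d2 := key i.castSucc j
    have e : A i j = (c i.succ j.succ - c i.succ j.castSucc)
        - (c i.castSucc j.succ - c i.castSucc j.castSucc) := by
      simp only [hA]; ring
    rw [e]; omega
  · -- row sums
    intro i
    have e : rowPS A i n = 1 := by
      rw [hrps i n le_rfl,
        show (⟨n, by omega⟩ : Fin (n+1)) = Fin.last n from rfl,
        (hlast i.succ).2, (hlast i.castSucc).2]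
      push_cast [Fin.val_succ, Fin.coe_castSucc]
      ring
    simp only [rowPS, filter_univ_lt_aux] at e
    exact e
  · -- column sums
    intro j
    have e : colPS A n j = 1 := by
      rw [hcps n le_rfl j,
        show (⟨n, by omega⟩ : Fin (n+1)) = Fin.last n from rfl,
        (hlast j.succ).1, (hlast j.castSucc).1]
      push_cast [Fin.val_succ, Fin.coe_castSucc]
      ring
    simp only [colPS, filter_univ_lt_aux] at e
    exact e
  · -- column partial sums in {0,1}
    intro i j
    rw [colPS_clip_aux, hcps (min i n) (min_le_right _ _) j]
    exact key _ j
  · -- row partial sums nonneg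
    intro i j
    rw [rowPS_clip_aux, hrps i (min j n) (min_le_right _ _)]
    have h : c i.castSucc ⟨min j n, by omega⟩ ≤ c i.succ ⟨min j n, by omega⟩ :=
      hmono (i : ℕ) i.isLt ⟨min j n, by omega⟩
    exact sub_nonneg.mpr h
  · -- magog inequality
    intro i j hi hj
    rw [hrps ⟨i+1, by omega⟩ (j+1) (by omega),
        hcps (i+2) (by omega) ⟨j+1, by omega⟩,
        hcps (i+1) (by omega) ⟨j, by omega⟩]
    show (0:ℤ) ≤ (c ⟨i+2, by omega⟩ ⟨j+1, by omega⟩ - c ⟨i+1, by omega⟩ ⟨j+1, by omega⟩)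
        + (c ⟨i+2, by omega⟩ ⟨j+2, by omega⟩ - c ⟨i+2, by omega⟩ ⟨j+1, by omega⟩)
        - (c ⟨i+1, by omega⟩ ⟨j+1, by omega⟩ - c ⟨i+1, by omega⟩ ⟨j, by omega⟩)
    have h := hineq i j (by omega) (by omega)
    linarith
  · -- corner sums recover c
    funext i j
    show (∑ i' ∈ Finset.univ.filter (fun i' : Fin n => (i':ℕ) < (i:ℕ)),
        ∑ j' ∈ Finset.univ.filter (fun j' : Fin n => (j':ℕ) < (j:ℕ)), A i' j') = c i j
    rw [show (∑ i' ∈ Finset.univ.filter (fun i' : Fin n => (i':ℕ) < (i:ℕ)),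
        ∑ j' ∈ Finset.univ.filter (fun j' : Fin n => (j':ℕ) < (j:ℕ)), A i' j')
      = ∑ i' ∈ Finset.univ.filter (fun i' : Fin n => (i':ℕ) < (i:ℕ)),
        (c i'.succ ⟨(j:ℕ), by omega⟩ - c i'.castSucc ⟨(j:ℕ), by omega⟩)
      from Finset.sum_congr rfl (fun i' _ => hrps i' (j:ℕ) (by omega))]
    have t : (∑ i' ∈ Finset.univ.filter (fun i' : Fin n => (i':ℕ) < (i:ℕ)),
          (c i'.succ ⟨(j:ℕ), by omega⟩ - c i'.castSucc ⟨(j:ℕ), by omega⟩))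
        = c ⟨(i:ℕ), by omega⟩ ⟨(j:ℕ), by omega⟩ - c ⟨0, by omega⟩ ⟨(j:ℕ), by omega⟩ :=
      telescope_aux (fun k => c k ⟨(j:ℕ), by omega⟩) (i:ℕ) (by omega)
    rw [t]
    simp [Fin.mk_zero, Fin.eta, h0']
end

section
/- The composite map sending an n×n magog matrix (a_{i,j}) to the matrix (h_{i,j})_{0≤i,j≤n} with h_{i,j} = i + j − 2·Σ_{i'≤i, j'≤j} a_{i',j'} is a bijection from n×n magog matrices to magog height-function matrices of order n. -/
open Finset

/-- A magog height-function matrix of order `n`, indexed by `0 ≤ i, j ≤ n`. -/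
def IsMagogHFM (n : ℕ) (h : Fin (n + 1) → Fin (n + 1) → ℤ) : Prop :=
  (∀ k : Fin (n + 1), h 0 k = (k : ℕ) ∧ h k 0 = (k : ℕ)) ∧
  (∀ k : Fin (n + 1), h (Fin.last n) k = (n : ℤ) - (k : ℕ) ∧
      h k (Fin.last n) = (n : ℤ) - (k : ℕ)) ∧
  (∀ (i : Fin (n + 1)) (j : ℕ) (hj : j < n),
      h i ⟨j + 1, by omega⟩ - h i ⟨j, by omega⟩ = 1 ∨
      h i ⟨j + 1, by omega⟩ - h i ⟨j, by omega⟩ = -1) ∧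
  (∀ (i : ℕ) (hi : i < n) (j : Fin (n + 1)),
      ∃ k : ℕ, h ⟨i + 1, by omega⟩ j - h ⟨i, by omega⟩ j = 1 - 2 * (k : ℤ)) ∧
  (∀ (i j : ℕ) (hi : i + 2 ≤ n) (hj : j + 2 ≤ n),
      h ⟨i + 2, by omega⟩ ⟨j + 2, by omega⟩ + h ⟨i + 1, by omega⟩ ⟨j, by omega⟩ ≤
        2 * h ⟨i + 1, by omega⟩ ⟨j + 1, by omega⟩ + 1)

/-- The height-function map `h_{i,j} = i + j - 2 c_{i,j}`. -/
def hfOf {n : ℕ} (c : Fin (n + 1) → Fin (n + 1) → ℤ) : Fin (n + 1) → Fin (n + 1) → ℤ :=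
  fun i j => ((i : ℕ) : ℤ) + ((j : ℕ) : ℤ) - 2 * c i j

section Aux

variable {n : ℕ}

lemma filter_lt_succ {m : ℕ} (hm : m < n) :
    (Finset.univ.filter (fun j' : Fin n => (j' : ℕ) < m + 1)) =
      insert (⟨m, hm⟩ : Fin n) (Finset.univ.filter (fun j' : Fin n => (j' : ℕ) < m)) := by
  ext j'
  simp [Fin.ext_iff]
  omega

lemma sum_lt_succ {m : ℕ} (hm : m < n) (f : Fin n → ℤ) :
    ∑ j' ∈ Finset.univ.filter (fun j' : Fin n => (j' : ℕ) < m + 1), f j' =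
      (∑ j' ∈ Finset.univ.filter (fun j' : Fin n => (j' : ℕ) < m), f j') + f ⟨m, hm⟩ := by
  rw [filter_lt_succ hm, Finset.sum_insert (by simp)]
  ring

lemma filter_lt_of_ge {m : ℕ} (hm : n ≤ m) :
    (Finset.univ.filter (fun j' : Fin n => (j' : ℕ) < m)) = Finset.univ := by
  ext j'
  simp only [Finset.mem_filter, Finset.mem_univ, true_and, iff_true]
  exact lt_of_lt_of_le j'.isLt hm

lemma rowPS_full (a : Matrix (Fin n) (Fin n) ℤ) (i : Fin n) {j : ℕ} (hj : n ≤ j) :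
    rowPS a i j = ∑ j', a i j' := by
  rw [rowPS, filter_lt_of_ge hj]

lemma colPS_full (a : Matrix (Fin n) (Fin n) ℤ) {i : ℕ} (hi : n ≤ i) (j : Fin n) :
    colPS a i j = ∑ i', a i' j := by
  rw [colPS, filter_lt_of_ge hi]

lemma cornerOf_zero_left (a : Matrix (Fin n) (Fin n) ℤ) (j : Fin (n + 1)) :
    cornerOf a 0 j = 0 := by
  simp [cornerOf]

lemma cornerOf_zero_right (a : Matrix (Fin n) (Fin n) ℤ) (i : Fin (n + 1)) :
    cornerOf a i 0 = 0 := by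
  simp [cornerOf]

lemma cornerOf_succ_right (a : Matrix (Fin n) (Fin n) ℤ) (i : Fin (n + 1)) (j : ℕ)
    (hj : j < n) :
    cornerOf a i ⟨j + 1, by omega⟩ = cornerOf a i ⟨j, by omega⟩ + colPS a (i : ℕ) ⟨j, hj⟩ := by
  simp only [cornerOf, colPS]
  rw [← Finset.sum_add_distrib]
  exact Finset.sum_congr rfl fun i' _ => sum_lt_succ hj _

lemma cornerOf_succ_left (a : Matrix (Fin n) (Fin n) ℤ) (i : ℕ) (hi : i < n)
    (j : Fin (n + 1)) :
    cornerOf a ⟨i + 1, by omega⟩ j = cornerOf a ⟨i, by omega⟩ j + rowPS a ⟨i, hi⟩ (j : ℕ) :=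
  sum_lt_succ hi _

/-- Matrix of second differences of a corner-sum matrix. -/
def matOf (c : Fin (n + 1) → Fin (n + 1) → ℤ) : Matrix (Fin n) (Fin n) ℤ :=
  fun i j =>
    c ⟨(i : ℕ) + 1, by omega⟩ ⟨(j : ℕ) + 1, by omega⟩
      - c ⟨(i : ℕ), by omega⟩ ⟨(j : ℕ) + 1, by omega⟩
      - c ⟨(i : ℕ) + 1, by omega⟩ ⟨(j : ℕ), by omega⟩
      + c ⟨(i : ℕ), by omega⟩ ⟨(j : ℕ), by omega⟩

lemma matOf_cornerOf (a : Matrix (Fin n) (Fin n) ℤ) : matOf (cornerOf a) = a := by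
  funext i j
  have h1 := cornerOf_succ_left a i i.isLt ⟨(j : ℕ) + 1, by omega⟩
  have h2 := cornerOf_succ_left a i i.isLt ⟨(j : ℕ), by omega⟩
  have h3 := rowPS_succ a ⟨(i : ℕ), i.isLt⟩ j j.isLt
  simp only [Fin.eta] at h1 h2 h3
  simp only [matOf]
  omega

lemma colPS_matOf (c : Fin (n + 1) → Fin (n + 1) → ℤ) (hc0 : ∀ k, c 0 k = 0) :
    ∀ (i : ℕ) (hi : i ≤ n) (j : Fin n),
      colPS (matOf c) i j =
        c ⟨i, by omega⟩ ⟨(j : ℕ) + 1, by omega⟩ - c ⟨i, by omega⟩ ⟨(j : ℕ), by omega⟩ := by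
  intro i
  induction i with
  | zero =>
    intro hi j
    have e0 : (⟨0, by omega⟩ : Fin (n + 1)) = 0 := by ext; simp
    rw [colPS_zero, e0, hc0, hc0]; ring
  | succ i ih =>
    intro hi j
    have h1 := colPS_succ (matOf c) i (by omega) j
    rw [ih (by omega) j] at h1
    have h2 : matOf c ⟨i, by omega⟩ j =
        c ⟨i + 1, by omega⟩ ⟨(j : ℕ) + 1, by omega⟩ - c ⟨i, by omega⟩ ⟨(j : ℕ) + 1, by omega⟩
          - c ⟨i + 1, by omega⟩ ⟨(j : ℕ), by omega⟩ + c ⟨i, by omega⟩ ⟨(j : ℕ), by omega⟩ := rfl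
    omega

lemma rowPS_matOf (c : Fin (n + 1) → Fin (n + 1) → ℤ) (hc0 : ∀ k, c k 0 = 0) :
    ∀ (j : ℕ) (hj : j ≤ n) (i : Fin n),
      rowPS (matOf c) i j =
        c ⟨(i : ℕ) + 1, by omega⟩ ⟨j, by omega⟩ - c ⟨(i : ℕ), by omega⟩ ⟨j, by omega⟩ := by
  intro j
  induction j with
  | zero =>
    intro hj i
    have e0 : (⟨0, by omega⟩ : Fin (n + 1)) = 0 := by ext; simp
    rw [rowPS_zero, e0, hc0, hc0]; ring
  | succ j ih =>
    intro hj i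
    have h1 := rowPS_succ (matOf c) i j (by omega)
    rw [ih (by omega) i] at h1
    have h2 : matOf c i ⟨j, by omega⟩ =
        c ⟨(i : ℕ) + 1, by omega⟩ ⟨j + 1, by omega⟩ - c ⟨(i : ℕ), by omega⟩ ⟨j + 1, by omega⟩
          - c ⟨(i : ℕ) + 1, by omega⟩ ⟨j, by omega⟩ + c ⟨(i : ℕ), by omega⟩ ⟨j, by omega⟩ := rfl
    omega

lemma cornerOf_matOf (c : Fin (n + 1) → Fin (n + 1) → ℤ) (hc0 : ∀ k, c 0 k = 0)
    (hc0' : ∀ k, c k 0 = 0) : cornerOf (matOf c) = c := by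
  have key : ∀ (j : ℕ) (hj : j ≤ n) (i : Fin (n + 1)),
      cornerOf (matOf c) i ⟨j, by omega⟩ = c i ⟨j, by omega⟩ := by
    intro j
    induction j with
    | zero =>
      intro hj i
      have e0 : (⟨0, by omega⟩ : Fin (n + 1)) = 0 := by ext; simp
      rw [e0, cornerOf_zero_right, hc0']
    | succ j ih =>
      intro hj i
      have h1 := cornerOf_succ_right (matOf c) i j (by omega)
      rw [ih (by omega) i] at h1
      have h2 := colPS_matOf c hc0 (i : ℕ) (Nat.lt_succ_iff.mp i.isLt) ⟨j, by omega⟩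
      simp only [Fin.eta] at h2
      omega
  funext i j
  have := key (j : ℕ) (by omega) i
  simpa only [Fin.eta] using this

lemma csm_of_magog (a : Matrix (Fin n) (Fin n) ℤ) (ha : IsMagog n a) :
    IsMagogCSM n (cornerOf a) := by
  obtain ⟨⟨hent, hrsum, hcsum, hcol, hrow⟩, hineq⟩ := ha
  have hlastcol : ∀ (m k : ℕ) (hm : m = n) (hk : k ≤ n),
      cornerOf a ⟨m, by omega⟩ ⟨k, by omega⟩ = (k : ℤ) := by
    intro m k hm
    subst hm
    induction k with
    | zero =>
      intro hk
      have e0 : (⟨0, by omega⟩ : Fin (m + 1)) = 0 := by ext; simp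
      rw [e0, cornerOf_zero_right]
      simp
    | succ k ih =>
      intro hk
      have h1 : cornerOf a ⟨m, by omega⟩ ⟨k + 1, by omega⟩ =
          cornerOf a ⟨m, by omega⟩ ⟨k, by omega⟩ + colPS a m ⟨k, by omega⟩ :=
        cornerOf_succ_right a ⟨m, by omega⟩ k (by omega)
      have h2 : colPS a m ⟨k, by omega⟩ = 1 := by
        rw [colPS_full a (le_refl m), hcsum]
      rw [h1, ih (by omega), h2]
      push_cast
      ring
  have hlastrow : ∀ (k m : ℕ) (hm : m = n) (hk : k ≤ n),
      cornerOf a ⟨k, by omega⟩ ⟨m, by omega⟩ = (k : ℤ) := by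
    intro k m hm
    subst hm
    induction k with
    | zero =>
      intro hk
      have e0 : (⟨0, by omega⟩ : Fin (m + 1)) = 0 := by ext; simp
      rw [e0, cornerOf_zero_left]
      simp
    | succ k ih =>
      intro hk
      have h1 : cornerOf a ⟨k + 1, by omega⟩ ⟨m, by omega⟩ =
          cornerOf a ⟨k, by omega⟩ ⟨m, by omega⟩ + rowPS a ⟨k, by omega⟩ m :=
        cornerOf_succ_left a k (by omega) ⟨m, by omega⟩
      have h2 : rowPS a ⟨k, by omega⟩ m = 1 := by
        rw [rowPS_full a _ (le_refl m), hrsum]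
      rw [h1, ih (by omega), h2]
      push_cast
      ring
  refine ⟨fun k => ⟨cornerOf_zero_left a k, cornerOf_zero_right a k⟩, ?_, ?_, ?_, ?_⟩
  · intro k
    constructor
    · have := hlastcol n (k : ℕ) rfl (Nat.lt_succ_iff.mp k.isLt)
      exact this
    · have := hlastrow (k : ℕ) n rfl (Nat.lt_succ_iff.mp k.isLt)
      exact this
  · intro i j hj
    have h1 := cornerOf_succ_right a i j hj
    have h2 := hcol (i : ℕ) ⟨j, hj⟩
    omega
  · intro i hi j
    have h1 := cornerOf_succ_left a i hi j
    have h2 := hrow ⟨i, hi⟩ (j : ℕ)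
    omega
  · intro i j hi hj
    by_cases hi' : i + 2 < n
    · by_cases hj' : j + 2 < n
      · have h0 := hineq i j hi' hj'
        have e1 : cornerOf a ⟨i + 2, by omega⟩ ⟨j + 1, by omega⟩ =
            cornerOf a ⟨i + 1, by omega⟩ ⟨j + 1, by omega⟩ +
              rowPS a ⟨i + 1, by omega⟩ (j + 1) :=
          cornerOf_succ_left a (i + 1) (by omega) ⟨j + 1, by omega⟩
        have e2 : cornerOf a ⟨i + 2, by omega⟩ ⟨j + 2, by omega⟩ =
            cornerOf a ⟨i + 2, by omega⟩ ⟨j + 1, by omega⟩ +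
              colPS a (i + 2) ⟨j + 1, by omega⟩ :=
          cornerOf_succ_right a ⟨i + 2, by omega⟩ (j + 1) (by omega)
        have e3 : cornerOf a ⟨i + 1, by omega⟩ ⟨j + 1, by omega⟩ =
            cornerOf a ⟨i + 1, by omega⟩ ⟨j, by omega⟩ +
              colPS a (i + 1) ⟨j, by omega⟩ :=
          cornerOf_succ_right a ⟨i + 1, by omega⟩ j (by omega)
        omega
      · -- j + 2 = n
        have f1 := hlastrow (i + 1) (j + 2) (by omega) (by omega)
        have f6 := hlastrow (i + 2) (j + 2) (by omega) (by omega)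
        have f2 : cornerOf a ⟨i + 1, by omega⟩ ⟨j + 2, by omega⟩ =
            cornerOf a ⟨i + 1, by omega⟩ ⟨j + 1, by omega⟩ +
              colPS a (i + 1) ⟨j + 1, by omega⟩ :=
          cornerOf_succ_right a ⟨i + 1, by omega⟩ (j + 1) (by omega)
        have f3 : cornerOf a ⟨i + 1, by omega⟩ ⟨j + 1, by omega⟩ =
            cornerOf a ⟨i + 1, by omega⟩ ⟨j, by omega⟩ +
              colPS a (i + 1) ⟨j, by omega⟩ :=
          cornerOf_succ_right a ⟨i + 1, by omega⟩ j (by omega)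
        have f4 := hcol (i + 1) ⟨j + 1, by omega⟩
        have f5 := hcol (i + 1) ⟨j, by omega⟩
        omega
    · -- i + 2 = n
      have f1 := hlastcol (i + 2) (j + 2) (by omega) (by omega)
      have f2 := hlastcol (i + 2) (j + 1) (by omega) (by omega)
      have f3 : cornerOf a ⟨i + 2, by omega⟩ ⟨j + 1, by omega⟩ =
          cornerOf a ⟨i + 1, by omega⟩ ⟨j + 1, by omega⟩ +
            rowPS a ⟨i + 1, by omega⟩ (j + 1) :=
        cornerOf_succ_left a (i + 1) (by omega) ⟨j + 1, by omega⟩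
      have f4 := hrow ⟨i + 1, by omega⟩ (j + 1)
      have f5 : cornerOf a ⟨i + 1, by omega⟩ ⟨j + 1, by omega⟩ =
          cornerOf a ⟨i + 1, by omega⟩ ⟨j, by omega⟩ +
            colPS a (i + 1) ⟨j, by omega⟩ :=
        cornerOf_succ_right a ⟨i + 1, by omega⟩ j (by omega)
      have f6 := hcol (i + 1) ⟨j, by omega⟩
      omega

lemma magog_of_csm (c : Fin (n + 1) → Fin (n + 1) → ℤ) (hc : IsMagogCSM n c) :
    IsMagog n (matOf c) := by
  obtain ⟨hz, hb, hcol, hrow, hineq⟩ := hc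
  have hC := colPS_matOf c (fun k => (hz k).1)
  have hR := rowPS_matOf c (fun k => (hz k).2)
  have hcps : ∀ (i : ℕ) (j : Fin n),
      colPS (matOf c) i j = 0 ∨ colPS (matOf c) i j = 1 := by
    intro i j
    by_cases hi : i ≤ n
    · rw [hC i hi j]
      exact hcol ⟨i, by omega⟩ (j : ℕ) j.isLt
    · have heq : colPS (matOf c) i j = colPS (matOf c) n j := by
        rw [colPS, colPS, filter_lt_of_ge (by omega), filter_lt_of_ge (le_refl n)]
      rw [heq, hC n (le_refl n) j]
      have h1 : c ⟨n, by omega⟩ ⟨(j : ℕ) + 1, by omega⟩ = (((j : ℕ) + 1 : ℕ) : ℤ) :=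
        (hb ⟨(j : ℕ) + 1, by omega⟩).1
      have h2 : c ⟨n, by omega⟩ ⟨(j : ℕ), by omega⟩ = (((j : ℕ) : ℕ) : ℤ) :=
        (hb ⟨(j : ℕ), by omega⟩).1
      omega
  have hrps : ∀ (i : Fin n) (j : ℕ), 0 ≤ rowPS (matOf c) i j := by
    intro i j
    by_cases hj : j ≤ n
    · rw [hR j hj i]
      have := hrow (i : ℕ) i.isLt ⟨j, by omega⟩
      omega
    · have heq : rowPS (matOf c) i j = rowPS (matOf c) i n := by
        rw [rowPS, rowPS, filter_lt_of_ge (by omega), filter_lt_of_ge (le_refl n)]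
      rw [heq, hR n (le_refl n) i]
      have h1 : c ⟨(i : ℕ) + 1, by omega⟩ ⟨n, by omega⟩ = (((i : ℕ) + 1 : ℕ) : ℤ) :=
        (hb ⟨(i : ℕ) + 1, by omega⟩).2
      have h2 : c ⟨(i : ℕ), by omega⟩ ⟨n, by omega⟩ = (((i : ℕ) : ℕ) : ℤ) :=
        (hb ⟨(i : ℕ), by omega⟩).2
      omega
  refine ⟨⟨?_, ?_, ?_, hcps, hrps⟩, ?_⟩
  · intro i j
    have h1 := hcps ((i : ℕ) + 1) j
    have h2 := hcps (i : ℕ) j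
    have h3 := colPS_succ (matOf c) (i : ℕ) i.isLt j
    simp only [Fin.eta] at h3
    omega
  · intro i
    have h0 := hR n (le_refl n) i
    rw [rowPS_full (matOf c) i (le_refl n)] at h0
    have h1 : c ⟨(i : ℕ) + 1, by omega⟩ ⟨n, by omega⟩ = (((i : ℕ) + 1 : ℕ) : ℤ) :=
      (hb ⟨(i : ℕ) + 1, by omega⟩).2
    have h2 : c ⟨(i : ℕ), by omega⟩ ⟨n, by omega⟩ = (((i : ℕ) : ℕ) : ℤ) :=
      (hb ⟨(i : ℕ), by omega⟩).2
    omega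
  · intro j
    have h0 := hC n (le_refl n) j
    rw [colPS_full (matOf c) (le_refl n) j] at h0
    have h1 : c ⟨n, by omega⟩ ⟨(j : ℕ) + 1, by omega⟩ = (((j : ℕ) + 1 : ℕ) : ℤ) :=
      (hb ⟨(j : ℕ) + 1, by omega⟩).1
    have h2 : c ⟨n, by omega⟩ ⟨(j : ℕ), by omega⟩ = (((j : ℕ) : ℕ) : ℤ) :=
      (hb ⟨(j : ℕ), by omega⟩).1
    omega
  · intro i j hi hj
    have e1 : rowPS (matOf c) ⟨i + 1, by omega⟩ (j + 1) =
        c ⟨i + 2, by omega⟩ ⟨j + 1, by omega⟩ - c ⟨i + 1, by omega⟩ ⟨j + 1, by omega⟩ :=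
      hR (j + 1) (by omega) ⟨i + 1, by omega⟩
    have e2 : colPS (matOf c) (i + 2) ⟨j + 1, by omega⟩ =
        c ⟨i + 2, by omega⟩ ⟨j + 2, by omega⟩ - c ⟨i + 2, by omega⟩ ⟨j + 1, by omega⟩ :=
      hC (i + 2) (by omega) ⟨j + 1, by omega⟩
    have e3 : colPS (matOf c) (i + 1) ⟨j, by omega⟩ =
        c ⟨i + 1, by omega⟩ ⟨j + 1, by omega⟩ - c ⟨i + 1, by omega⟩ ⟨j, by omega⟩ :=
      hC (i + 1) (by omega) ⟨j, by omega⟩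
    have h0 := hineq i j (by omega) (by omega)
    omega

/-- The corner-sum matrix associated to a height function. -/
def csmOf (h : Fin (n + 1) → Fin (n + 1) → ℤ) : Fin (n + 1) → Fin (n + 1) → ℤ :=
  fun i j => (((i : ℕ) : ℤ) + ((j : ℕ) : ℤ) - h i j) / 2

lemma hfm_parity {h : Fin (n + 1) → Fin (n + 1) → ℤ}
    (h0 : ∀ k : Fin (n + 1), h k 0 = ((k : ℕ) : ℤ))
    (hhor : ∀ (i : Fin (n + 1)) (j : ℕ) (hj : j < n),
      h i ⟨j + 1, by omega⟩ - h i ⟨j, by omega⟩ = 1 ∨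
      h i ⟨j + 1, by omega⟩ - h i ⟨j, by omega⟩ = -1) :
    ∀ (i : Fin (n + 1)) (j : ℕ) (hj : j < n + 1),
      2 ∣ ((i : ℕ) : ℤ) + (j : ℤ) - h i ⟨j, hj⟩ := by
  intro i j
  induction j with
  | zero =>
    intro hj
    rw [show (⟨0, hj⟩ : Fin (n + 1)) = 0 by ext; simp]
    have := h0 i
    omega
  | succ j ih =>
    intro hj
    have d := hhor i j (by omega)
    have p := ih (by omega)
    omega

lemma hfm_of_csm (c : Fin (n + 1) → Fin (n + 1) → ℤ) (hc : IsMagogCSM n c) :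
    IsMagogHFM n (hfOf c) := by
  obtain ⟨hz, hb, hcol, hrow, hineq⟩ := hc
  refine ⟨?_, ?_, ?_, ?_, ?_⟩
  · intro k
    have h1 := (hz k).1
    have h2 := (hz k).2
    constructor
    · simp only [hfOf, Fin.val_zero]
      omega
    · simp only [hfOf, Fin.val_zero]
      omega
  · intro k
    have h1 := (hb k).1
    have h2 := (hb k).2
    constructor
    · simp only [hfOf, Fin.val_last]
      omega
    · simp only [hfOf, Fin.val_last]
      omega
  · intro i j hj
    have d := hcol i j hj
    simp only [hfOf]
    omega
  · intro i hi j
    have m := hrow i hi j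
    refine ⟨(c ⟨i + 1, by omega⟩ j - c ⟨i, by omega⟩ j).toNat, ?_⟩
    simp only [hfOf]
    omega
  · intro i j hi hj
    have m := hineq i j hi hj
    simp only [hfOf]
    omega

lemma csm_of_hfm (h : Fin (n + 1) → Fin (n + 1) → ℤ) (hh : IsMagogHFM n h) :
    IsMagogCSM n (csmOf h) := by
  obtain ⟨hb0, hbl, hhor, hver, hineq⟩ := hh
  have par := hfm_parity (fun k => (hb0 k).2) hhor
  refine ⟨?_, ?_, ?_, ?_, ?_⟩
  · intro k
    have h1 := (hb0 k).1
    have h2 := (hb0 k).2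
    constructor
    · simp only [csmOf, Fin.val_zero]
      omega
    · simp only [csmOf, Fin.val_zero]
      omega
  · intro k
    have h1 := (hbl k).1
    have h2 := (hbl k).2
    constructor
    · simp only [csmOf, Fin.val_last]
      omega
    · simp only [csmOf, Fin.val_last]
      omega
  · intro i j hj
    obtain ⟨m1, hm1⟩ := par i (j + 1) (by omega)
    obtain ⟨m0, hm0⟩ := par i j (by omega)
    have d := hhor i j hj
    simp only [csmOf]
    omega
  · intro i hi j
    obtain ⟨m1, hm1⟩ := par ⟨i + 1, by omega⟩ (j : ℕ) j.isLt
    obtain ⟨m0, hm0⟩ := par ⟨i, by omega⟩ (j : ℕ) j.isLt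
    simp only [Fin.eta] at hm1 hm0
    obtain ⟨k, hk⟩ := hver i hi j
    simp only [csmOf]
    omega
  · intro i j hi hj
    obtain ⟨m1, hm1⟩ := par ⟨i + 1, by omega⟩ (j + 1) (by omega)
    obtain ⟨m2, hm2⟩ := par ⟨i + 2, by omega⟩ (j + 2) (by omega)
    obtain ⟨m0, hm0⟩ := par ⟨i + 1, by omega⟩ j (by omega)
    have m := hineq i j hi hj
    simp only [csmOf]
    omega

lemma hfOf_csmOf (h : Fin (n + 1) → Fin (n + 1) → ℤ) (hh : IsMagogHFM n h) :
    hfOf (csmOf h) = h := by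
  obtain ⟨hb0, hbl, hhor, hver, hineq⟩ := hh
  funext i j
  obtain ⟨m, hm⟩ := hfm_parity (fun k => (hb0 k).2) hhor i (j : ℕ) j.isLt
  simp only [Fin.eta] at hm
  simp only [hfOf, csmOf]
  omega

end Aux

/-- The composite map `a ↦ (h_{i,j}) = (i + j - 2 ∑_{i' ≤ i, j' ≤ j} a_{i',j'})`
is a bijection from `n × n` magog matrices to magog height-function matrices of
order `n`. -/
theorem magog_to_heightFunction_bijective (n : ℕ) :
    Set.BijOn (fun a : Matrix (Fin n) (Fin n) ℤ => hfOf (cornerOf a))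
      {a | IsMagog n a} {h | IsMagogHFM n h} := by
  refine ⟨?_, ?_, ?_⟩
  · intro a ha
    exact hfm_of_csm _ (csm_of_magog a ha)
  · intro a ha b hb hab
    have hcc : cornerOf a = cornerOf b := by
      funext i j
      have := congrFun (congrFun hab i) j
      simp only [hfOf] at this
      omega
    calc a = matOf (cornerOf a) := (matOf_cornerOf a).symm
      _ = matOf (cornerOf b) := by rw [hcc]
      _ = b := matOf_cornerOf b
  · intro h hh
    have hcsm := csm_of_hfm h hh
    refine ⟨matOf (csmOf h), magog_of_csm _ hcsm, ?_⟩
    show hfOf (cornerOf (matOf (csmOf h))) = h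
    rw [cornerOf_matOf _ (fun k => (hcsm.1 k).1) (fun k => (hcsm.1 k).2)]
    exact hfOf_csmOf h hh
end

section
/- Every alternating sign matrix and every magog matrix is a square sign matrix, and for n = 3 the sets of 3×3 alternating sign matrices and 3×3 magog matrices each have cardinality 7 but are not equal as sets. -/
open Finset

/-- An alternating sign matrix: a square sign matrix whose partial row sums
also lie in `{0, 1}`. -/
def IsASM (n : ℕ) (a : Matrix (Fin n) (Fin n) ℤ) : Prop :=
  IsSquareSign n a ∧ ∀ (i : Fin n) (j : ℕ), rowPS a i j = 0 ∨ rowPS a i j = 1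

/- ### Auxiliary material -/


lemma rowPS_stable {n : ℕ} (a : Matrix (Fin n) (Fin n) ℤ) (i : Fin n) {j : ℕ}
    (h : n ≤ j) : rowPS a i j = rowPS a i n := by
  unfold rowPS
  congr 1
  ext j'
  simp only [Finset.mem_filter, Finset.mem_univ, true_and]
  have := j'.isLt
  omega

lemma colPS_stable {n : ℕ} (a : Matrix (Fin n) (Fin n) ℤ) {i : ℕ} (h : n ≤ i)
    (j : Fin n) : colPS a i j = colPS a n j := by
  unfold colPS
  congr 1
  ext i'
  simp only [Finset.mem_filter, Finset.mem_univ, true_and]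
  have := i'.isLt
  omega

def SS3 (a : Matrix (Fin 3) (Fin 3) ℤ) : Prop :=
  (∀ i j, a i j = 0 ∨ a i j = 1 ∨ a i j = -1) ∧
  (∀ i, ∑ j, a i j = 1) ∧
  (∀ j, ∑ i, a i j = 1) ∧
  (∀ (i : Fin 4) (j : Fin 3), colPS a i j = 0 ∨ colPS a i j = 1) ∧
  (∀ (i : Fin 3) (j : Fin 4), 0 ≤ rowPS a i j)

def ASM3 (a : Matrix (Fin 3) (Fin 3) ℤ) : Prop :=
  SS3 a ∧ ∀ (i : Fin 3) (j : Fin 4), rowPS a i j = 0 ∨ rowPS a i j = 1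

def MAG3 (a : Matrix (Fin 3) (Fin 3) ℤ) : Prop :=
  SS3 a ∧ 0 ≤ rowPS a ⟨1, by omega⟩ 1 + colPS a 2 ⟨1, by omega⟩ - colPS a 1 ⟨0, by omega⟩

instance (a : Matrix (Fin 3) (Fin 3) ℤ) : Decidable (SS3 a) := by
  unfold SS3; unfold Matrix at a; infer_instance

instance (a : Matrix (Fin 3) (Fin 3) ℤ) : Decidable (ASM3 a) := by
  unfold ASM3; infer_instance

instance (a : Matrix (Fin 3) (Fin 3) ℤ) : Decidable (MAG3 a) := by
  unfold MAG3; infer_instance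

lemma ss3_iff (a : Matrix (Fin 3) (Fin 3) ℤ) : IsSquareSign 3 a ↔ SS3 a := by
  constructor
  · rintro ⟨h1, h2, h3, h4, h5⟩
    exact ⟨h1, h2, h3, fun i j => h4 i j, fun i j => h5 i j⟩
  · rintro ⟨h1, h2, h3, h4, h5⟩
    refine ⟨h1, h2, h3, fun i j => ?_, fun i j => ?_⟩
    · by_cases hi : i < 4
      · exact h4 ⟨i, hi⟩ j
      · rw [colPS_stable a (by omega) j]
        have := h4 ⟨3, by omega⟩ j
        simpa using this
    · by_cases hj : j < 4
      · exact h5 i ⟨j, hj⟩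
      · rw [rowPS_stable a i (by omega)]
        have := h5 i ⟨3, by omega⟩
        simpa using this

lemma asm3_iff (a : Matrix (Fin 3) (Fin 3) ℤ) : IsASM 3 a ↔ ASM3 a := by
  constructor
  · rintro ⟨hs, h⟩
    exact ⟨(ss3_iff a).1 hs, fun i j => h i j⟩
  · rintro ⟨hs, h⟩
    refine ⟨(ss3_iff a).2 hs, fun i j => ?_⟩
    by_cases hj : j < 4
    · exact h i ⟨j, hj⟩
    · rw [rowPS_stable a i (by omega)]
      have := h i ⟨3, by omega⟩
      simpa using this

lemma mag3_iff (a : Matrix (Fin 3) (Fin 3) ℤ) : IsMagog 3 a ↔ MAG3 a := by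
  constructor
  · rintro ⟨hs, h⟩
    exact ⟨(ss3_iff a).1 hs, h 0 0 (by omega) (by omega)⟩
  · rintro ⟨hs, h⟩
    refine ⟨(ss3_iff a).2 hs, fun i j hi hj => ?_⟩
    have hi0 : i = 0 := by omega
    have hj0 : j = 0 := by omega
    subst hi0; subst hj0
    exact h

/-- The five possible rows of a 3×3 magog matrix; the first four are the
possible rows of a 3×3 ASM. -/
def rowTab : Fin 5 → (Fin 3 → ℤ) :=
  ![![1,0,0], ![0,1,0], ![0,0,1], ![1,-1,1], ![1,1,-1]]

def gm (t : Fin 5 × Fin 5 × Fin 5) : Matrix (Fin 3) (Fin 3) ℤ :=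
  Matrix.of ![rowTab t.1, rowTab t.2.1, rowTab t.2.2]

lemma gm_inj : Function.Injective gm := by
  have hrt : Function.Injective rowTab := by decide
  rintro ⟨t0, t1, t2⟩ ⟨s0, s1, s2⟩ h
  have h0 : rowTab t0 = rowTab s0 := congrFun h 0
  have h1 : rowTab t1 = rowTab s1 := congrFun h 1
  have h2 : rowTab t2 = rowTab s2 := congrFun h 2
  simp only [Prod.mk.injEq]
  exact ⟨hrt h0, hrt h1, hrt h2⟩

lemma rowPS_one (a : Matrix (Fin 3) (Fin 3) ℤ) (i : Fin 3) :
    rowPS a i 1 = a i 0 := by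
  unfold rowPS
  rw [show Finset.univ.filter (fun j' : Fin 3 => (j' : ℕ) < 1) = {0} from by decide]
  simp

lemma rowPS_two (a : Matrix (Fin 3) (Fin 3) ℤ) (i : Fin 3) :
    rowPS a i 2 = a i 0 + a i 1 := by
  unfold rowPS
  rw [show Finset.univ.filter (fun j' : Fin 3 => (j' : ℕ) < 2) = {0, 1} from by decide]
  rw [Finset.sum_pair (by decide)]

/-- Row classification for magog (square-sign) matrices. -/
lemma row_classify_mag (a : Matrix (Fin 3) (Fin 3) ℤ) (h : SS3 a) (i : Fin 3) :
    ∃ k : Fin 5, (fun j => a i j) = rowTab k := by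
  have hx := h.1 i 0
  have hy := h.1 i 1
  have hz := h.1 i 2
  have hs := h.2.1 i
  rw [Fin.sum_univ_three] at hs
  have hp1 := h.2.2.2.2 i 1
  have hp2 := h.2.2.2.2 i 2
  rw [show ((1 : Fin 4) : ℕ) = 1 from rfl, rowPS_one] at hp1
  rw [show ((2 : Fin 4) : ℕ) = 2 from rfl, rowPS_two] at hp2
  have key : (a i 0 = 1 ∧ a i 1 = 0 ∧ a i 2 = 0) ∨
      (a i 0 = 0 ∧ a i 1 = 1 ∧ a i 2 = 0) ∨
      (a i 0 = 0 ∧ a i 1 = 0 ∧ a i 2 = 1) ∨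
      (a i 0 = 1 ∧ a i 1 = -1 ∧ a i 2 = 1) ∨
      (a i 0 = 1 ∧ a i 1 = 1 ∧ a i 2 = -1) := by omega
  rcases key with ⟨h0, h1, h2⟩ | ⟨h0, h1, h2⟩ | ⟨h0, h1, h2⟩ | ⟨h0, h1, h2⟩ | ⟨h0, h1, h2⟩
  · exact ⟨0, by funext j; fin_cases j <;> simp [rowTab, Matrix.vecHead, Matrix.vecTail, h0, h1, h2]⟩
  · exact ⟨1, by funext j; fin_cases j <;> simp [rowTab, Matrix.vecHead, Matrix.vecTail, h0, h1, h2]⟩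
  · exact ⟨2, by funext j; fin_cases j <;> simp [rowTab, Matrix.vecHead, Matrix.vecTail, h0, h1, h2]⟩
  · exact ⟨3, by funext j; fin_cases j <;> simp [rowTab, Matrix.vecHead, Matrix.vecTail, h0, h1, h2]⟩
  · exact ⟨4, by funext j; fin_cases j <;> simp [rowTab, Matrix.vecHead, Matrix.vecTail, h0, h1, h2]⟩

lemma gm_of_ss3 (a : Matrix (Fin 3) (Fin 3) ℤ) (h : SS3 a) :
    ∃ t, gm t = a := by
  obtain ⟨k0, hk0⟩ := row_classify_mag a h 0
  obtain ⟨k1, hk1⟩ := row_classify_mag a h 1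
  obtain ⟨k2, hk2⟩ := row_classify_mag a h 2
  refine ⟨(k0, k1, k2), ?_⟩
  funext i j
  fin_cases i
  · exact (congrFun hk0.symm j)
  · exact (congrFun hk1.symm j)
  · exact (congrFun hk2.symm j)

lemma asm_set_eq : {a : Matrix (Fin 3) (Fin 3) ℤ | IsASM 3 a}
    = gm '' {t | ASM3 (gm t)} := by
  ext a
  simp only [Set.mem_setOf_eq, Set.mem_image]
  constructor
  · intro h
    have h3 := (asm3_iff a).1 h
    obtain ⟨t, ht⟩ := gm_of_ss3 a h3.1
    exact ⟨t, by rw [ht]; exact h3, ht⟩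
  · rintro ⟨t, ht, rfl⟩
    exact (asm3_iff _).2 ht

lemma mag_set_eq : {a : Matrix (Fin 3) (Fin 3) ℤ | IsMagog 3 a}
    = gm '' {t | MAG3 (gm t)} := by
  ext a
  simp only [Set.mem_setOf_eq, Set.mem_image]
  constructor
  · intro h
    have h3 := (mag3_iff a).1 h
    obtain ⟨t, ht⟩ := gm_of_ss3 a h3.1
    exact ⟨t, by rw [ht]; exact h3, ht⟩
  · rintro ⟨t, ht, rfl⟩
    exact (mag3_iff _).2 ht

set_option maxRecDepth 40000 in
lemma asm_card : {t : Fin 5 × Fin 5 × Fin 5 | ASM3 (gm t)}.ncard = 7 := by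
  rw [Set.ncard_eq_toFinset_card']
  decide

set_option maxRecDepth 40000 in
lemma mag_card : {t : Fin 5 × Fin 5 × Fin 5 | MAG3 (gm t)}.ncard = 7 := by
  rw [Set.ncard_eq_toFinset_card']
  decide

/-- Every alternating sign matrix and every magog matrix is a square sign matrix;
for `n = 3` there are exactly 7 of each, but the two sets are not equal. -/
theorem asm_magog_comparison :
    (∀ (n : ℕ) (a : Matrix (Fin n) (Fin n) ℤ), IsASM n a → IsSquareSign n a) ∧
    (∀ (n : ℕ) (a : Matrix (Fin n) (Fin n) ℤ), IsMagog n a → IsSquareSign n a) ∧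
    {a : Matrix (Fin 3) (Fin 3) ℤ | IsASM 3 a}.ncard = 7 ∧
    {a : Matrix (Fin 3) (Fin 3) ℤ | IsMagog 3 a}.ncard = 7 ∧
    {a : Matrix (Fin 3) (Fin 3) ℤ | IsASM 3 a} ≠
      {a : Matrix (Fin 3) (Fin 3) ℤ | IsMagog 3 a} := by
  refine ⟨fun n a h => h.1, fun n a h => h.1, ?_, ?_, ?_⟩
  · rw [asm_set_eq, Set.ncard_image_of_injective _ gm_inj]
    exact asm_card
  · rw [mag_set_eq, Set.ncard_image_of_injective _ gm_inj]
    exact mag_card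
  · intro h
    have hm : gm (2, 4, 2) ∈ {a : Matrix (Fin 3) (Fin 3) ℤ | IsMagog 3 a} := by
      simp only [Set.mem_setOf_eq]
      exact (mag3_iff _).2 (by decide)
    rw [← h] at hm
    simp only [Set.mem_setOf_eq] at hm
    exact (by decide : ¬ ASM3 (gm (2, 4, 2))) ((asm3_iff _).1 hm)
end
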